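/- Let 0 < α ≤ 1, h > 0, and suppose (x_n, y_n) is generated by the NSFD scheme for the predator–prey model: x_n = K u_{n-1}[h^α s x_{n-1} − ∑_{j=1}^n α_j^{[α]} x_{n-j} + x_0 α_n^{[α-1]}] / (K u_{n-1} + h^α (s u_{n-1} x_{n-1} + q K y_{n-1})) and y_n = [h^α β x_{n-1} y_{n-1} − u_{n-1} ∑_{j=1}^n α_j^{[α]} y_{n-j} + u_{n-1} y_0 α_n^{[α-1]}] / ((1 + h^α(s₀+E)) u_{n-1}), where u_n = 1 + q₁ x_n. If x_0 ≥ 0 and y_0 ≥ 0, then x_n ≥ 0 and y_n ≥ 0 for all n, for every h > 0. -/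
import Mathlib


noncomputable def glCoef (α : ℝ) (k : ℕ) : ℝ :=
  ∏ j ∈ Finset.range k, ((j : ℝ) - α) / ((j : ℝ) + 1)

lemma glCoef_nonpos {α : ℝ} (hα0 : 0 < α) (hα1 : α ≤ 1) {j : ℕ} (hj : 1 ≤ j) :
    glCoef α j ≤ 0 := by
  obtain ⟨m, rfl⟩ := Nat.exists_eq_add_of_le hj
  rw [glCoef, add_comm, Finset.prod_range_succ']
  apply mul_nonpos_of_nonneg_of_nonpos
  · apply Finset.prod_nonneg
    intro k _
    apply div_nonneg
    · push_cast; linarith [Nat.cast_nonneg (α := ℝ) k]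
    · positivity
  · simp only [Nat.cast_zero, zero_sub]
    apply div_nonpos_of_nonpos_of_nonneg <;> linarith

lemma glCoef_sub_one_nonneg {α : ℝ} (hα1 : α ≤ 1) (n : ℕ) :
    0 ≤ glCoef (α - 1) n := by
  apply Finset.prod_nonneg
  intro k _
  apply div_nonneg
  · have : (0:ℝ) ≤ (k:ℝ) := Nat.cast_nonneg k
    linarith
  · positivity

/-- The NSFD scheme for the fractional predator–prey model preserves positivity
unconditionally in the step size `h`.  Here `u n = 1 + q₁ x n` and
`glCoef (α-1) n = α_n^{[α-1]}`. -/
theorem nsfd_predator_prey_positivity (α h s K q q₁ β s₀ E : ℝ)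
    (hα0 : 0 < α) (hα1 : α ≤ 1) (hh : 0 < h)
    (hs : 0 < s) (hK : 0 < K) (hq : 0 < q) (hq₁ : 0 < q₁) (hβ : 0 < β)
    (hs₀ : 0 < s₀) (hE : 0 < E)
    (x y : ℕ → ℝ) (u : ℕ → ℝ) (hu : ∀ n, u n = 1 + q₁ * x n)
    (hx0 : 0 ≤ x 0) (hy0 : 0 ≤ y 0)
    (hxrec : ∀ n : ℕ, 1 ≤ n →
      x n = K * u (n - 1) *
          (h ^ α * s * x (n - 1) - (∑ j ∈ Finset.Icc 1 n, glCoef α j * x (n - j))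
            + x 0 * glCoef (α - 1) n) /
        (K * u (n - 1) + h ^ α * (s * u (n - 1) * x (n - 1) + q * K * y (n - 1))))
    (hyrec : ∀ n : ℕ, 1 ≤ n →
      y n = (h ^ α * β * x (n - 1) * y (n - 1)
            - u (n - 1) * (∑ j ∈ Finset.Icc 1 n, glCoef α j * y (n - j))
            + u (n - 1) * y 0 * glCoef (α - 1) n) /
        ((1 + h ^ α * (s₀ + E)) * u (n - 1))) :
    ∀ n, 0 ≤ x n ∧ 0 ≤ y n := by
  intro n
  induction n using Nat.strong_induction_on with
  | _ n ih =>
    rcases Nat.eq_zero_or_pos n with rfl | hn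
    · exact ⟨hx0, hy0⟩
    · have hn1 : n - 1 < n := Nat.sub_lt hn one_pos
      obtain ⟨hx', hy'⟩ := ih (n - 1) hn1
      have hup : 0 < u (n - 1) := by
        rw [hu]; nlinarith [mul_nonneg hq₁.le hx']
      have hpow : 0 < h ^ α := Real.rpow_pos_of_pos hh α
      have hsub : ∀ j ∈ Finset.Icc 1 n, n - j < n := by
        intro j hj
        have := Finset.mem_Icc.mp hj
        exact Nat.sub_lt hn this.1
      have hsumx : ∑ j ∈ Finset.Icc 1 n, glCoef α j * x (n - j) ≤ 0 := by
        apply Finset.sum_nonpos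
        intro j hj
        have hj1 := (Finset.mem_Icc.mp hj).1
        exact mul_nonpos_of_nonpos_of_nonneg (glCoef_nonpos hα0 hα1 hj1)
          (ih (n - j) (hsub j hj)).1
      have hsumy : ∑ j ∈ Finset.Icc 1 n, glCoef α j * y (n - j) ≤ 0 := by
        apply Finset.sum_nonpos
        intro j hj
        have hj1 := (Finset.mem_Icc.mp hj).1
        exact mul_nonpos_of_nonpos_of_nonneg (glCoef_nonpos hα0 hα1 hj1)
          (ih (n - j) (hsub j hj)).2
      have hgl := glCoef_sub_one_nonneg hα1 n
      constructor
      · rw [hxrec n hn]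
        apply div_nonneg
        · apply mul_nonneg (mul_nonneg hK.le hup.le)
          have h1 : 0 ≤ h ^ α * s * x (n - 1) :=
            mul_nonneg (mul_nonneg hpow.le hs.le) hx'
          have h2 : 0 ≤ x 0 * glCoef (α - 1) n := mul_nonneg hx0 hgl
          linarith
        · have h1 : 0 ≤ s * u (n - 1) * x (n - 1) :=
            mul_nonneg (mul_nonneg hs.le hup.le) hx'
          have h2 : 0 ≤ q * K * y (n - 1) :=
            mul_nonneg (mul_nonneg hq.le hK.le) hy'
          nlinarith [mul_nonneg hK.le hup.le, mul_nonneg hpow.le (add_nonneg h1 h2)]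
      · rw [hyrec n hn]
        apply div_nonneg
        · have h1 : 0 ≤ h ^ α * β * x (n - 1) * y (n - 1) :=
            mul_nonneg (mul_nonneg (mul_nonneg hpow.le hβ.le) hx') hy'
          have h2 : 0 ≤ u (n - 1) * y 0 * glCoef (α - 1) n :=
            mul_nonneg (mul_nonneg hup.le hy0) hgl
          have h3 : u (n - 1) * (∑ j ∈ Finset.Icc 1 n, glCoef α j * y (n - j)) ≤ 0 :=
            mul_nonpos_of_nonneg_of_nonpos hup.le hsumy
          linarith
        · have : 0 < 1 + h ^ α * (s₀ + E) := by nlinarith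
          positivity
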